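/- Let N be a feed-forward network with layers C₀, …, C_m and L a feed-forward lift of N with layers C'₀, …, C'_n, with L backward connected, and let ⋈ be the balanced equivalence relation on L with L/⋈ = N. Then the image of layer C'_{n−j} under the quotient map equals C_{m−j} for 0 ≤ j ≤ m, and the images of C'₀, C'₁, …, C'_{n−m} all equal C₀. -/
import Mathlib


/-- Lemma on layers of a backward connected feed-forward lift:
the quotient map sends layer `C'_{n-j}` of the lift onto layer `C_{m-j}` of the
quotient for `0 ≤ j ≤ m`, and sends each of the layers `C'_0, …, C'_{n-m}` onto
the first layer `C_0`. -/
theorem stmt_7 {CL CN : Type*} [Fintype CL] [Fintype CN] {k : ℕ}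
    (σL : Fin k → CL → CL) (σN : Fin k → CN → CN)
    (n m : ℕ)
    (layL : CL → ℕ) (layN : CN → ℕ)
    (hlayL : ∀ c, layL c ≤ n) (hlayN : ∀ c, layN c ≤ m)
    (hsurjL : ∀ j ≤ n, ∃ c, layL c = j) (hsurjN : ∀ j ≤ m, ∃ c, layN c = j)
    (hfixL : ∀ i c, layL c = 0 → σL i c = c)
    (hdownL : ∀ i c j, layL c = j + 1 → layL (σL i c) = j)
    (hsourceL : ∀ c, layL c < n → ∃ c' i, layL c' = layL c + 1 ∧ σL i c' = c)
    (hfixN : ∀ i c, layN c = 0 → σN i c = c)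
    (hdownN : ∀ i c j, layN c = j + 1 → layN (σN i c) = j)
    (hsourceN : ∀ c, layN c < m → ∃ c' i, layN c' = layN c + 1 ∧ σN i c' = c)
    (π : CL → CN) (hπsurj : Function.Surjective π)
    (hπ : ∀ i c, π (σL i c) = σN i (π c))
    (hbc : ∃ c : CL, ∀ c' : CL,
      Relation.ReflTransGen (fun a b => ∃ i, a = σL i b) c' c) :
    m ≤ n ∧
    (∀ j ≤ m, π '' {c | layL c = n - j} = {d | layN d = m - j}) ∧
    (∀ j' ≤ n - m, π '' {c | layL c = j'} = {d | layN d = 0}) := by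
  obtain ⟨c₀, hc₀⟩ := hbc
  have layσL : ∀ i c, layL (σL i c) = layL c - 1 := by
    intro i c
    rcases Nat.eq_zero_or_pos (layL c) with h | h
    · rw [hfixL i c h, h]
    · rw [hdownL i c (layL c - 1) (by omega)]
  have layσN : ∀ i d, layN (σN i d) = layN d - 1 := by
    intro i d
    rcases Nat.eq_zero_or_pos (layN d) with h | h
    · rw [hfixN i d h, h]
    · rw [hdownN i d (layN d - 1) (by omega)]
  have layApp : ∀ (w : List (Fin k)) (c : CL),
      layL (w.foldr σL c) = layL c - w.length := by
    intro w
    induction w with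
    | nil => intro c; simp
    | cons i w ih =>
      intro c
      simp only [List.foldr_cons, List.length_cons]
      rw [layσL, ih]
      omega
  have layAppN : ∀ (w : List (Fin k)) (d : CN),
      layN (w.foldr σN d) = layN d - w.length := by
    intro w
    induction w with
    | nil => intro d; simp
    | cons i w ih =>
      intro d
      simp only [List.foldr_cons, List.length_cons]
      rw [layσN, ih]
      omega
  have fixAppN : ∀ (w : List (Fin k)) (d : CN), layN d = 0 → w.foldr σN d = d := by
    intro w
    induction w with
    | nil => intro d _; rfl
    | cons i w ih =>
      intro d hd
      simp only [List.foldr_cons]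
      rw [ih d hd, hfixN i d hd]
  have piApp : ∀ (w : List (Fin k)) (c : CL),
      π (w.foldr σL c) = w.foldr σN (π c) := by
    intro w
    induction w with
    | nil => intro c; rfl
    | cons i w ih =>
      intro c
      simp only [List.foldr_cons]
      rw [hπ, ih]
  -- every cell of L is a word applied to c₀
  have hword0 : ∀ a b : CL, Relation.ReflTransGen (fun a b => ∃ i, a = σL i b) a b →
      ∃ w : List (Fin k), a = w.foldr σL b := by
    intro a b h
    induction h with
    | refl => exact ⟨[], rfl⟩
    | tail h1 h2 ih =>
      obtain ⟨i, hi⟩ := h2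
      obtain ⟨w, hw⟩ := ih
      refine ⟨w ++ [i], ?_⟩
      rw [List.foldr_append]
      rw [hi] at hw
      exact hw
  have hword : ∀ c' : CL, ∃ w : List (Fin k), c' = w.foldr σL c₀ :=
    fun c' => hword0 c' c₀ (hc₀ c')
  have hc₀top : layL c₀ = n := by
    obtain ⟨c, hc⟩ := hsurjL n le_rfl
    obtain ⟨w, rfl⟩ := hword c
    have h1 := layApp w c₀
    have h2 := hlayL c₀
    omega
  -- layN (π c) ≤ layL c
  have hπmono : ∀ c, layN (π c) ≤ layL c := by
    have key : ∀ t c, layN (π c) = t → t ≤ layL c := by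
      intro t
      induction t with
      | zero => intro c _; exact Nat.zero_le _
      | succ t ih =>
        intro c hc
        have hm1 : 1 ≤ m := le_trans (by omega) (hc ▸ hlayN (π c))
        obtain ⟨d0, hd0⟩ := hsurjN 0 (Nat.zero_le m)
        obtain ⟨d', i, -, -⟩ := hsourceN d0 (by omega)
        have hdown := hdownN i (π c) t hc
        rcases Nat.eq_zero_or_pos (layL c) with h0 | hpos
        · exfalso
          have : π (σL i c) = π c := by rw [hfixL i c h0]
          rw [hπ] at this
          rw [this, hc] at hdown
          omega
        · have hσ : layL (σL i c) = layL c - 1 := layσL i c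
          have : layN (π (σL i c)) = t := by rw [hπ]; exact hdown
          have := ih _ this
          omega
    intro c
    exact key (layN (π c)) c rfl
  set e : CN := π c₀ with he
  have hereach : ∀ d : CN, ∃ w : List (Fin k), d = w.foldr σN e := by
    intro d
    obtain ⟨c, rfl⟩ := hπsurj d
    obtain ⟨w, rfl⟩ := hword c
    exact ⟨w, piApp w c₀⟩
  have hetop : layN e = m := by
    obtain ⟨d, hd⟩ := hsurjN m le_rfl
    obtain ⟨w, rfl⟩ := hereach d
    have h1 := layAppN w e
    have h2 := hlayN e
    omega
  have hmn : m ≤ n := by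
    have := hπmono c₀
    rw [← he, hetop, hc₀top] at this
    exact this
  -- main decomposition for cells of L
  have main : ∀ c : CL, ∃ w : List (Fin k),
      layL c = n - w.length ∧ π c = w.foldr σN e ∧ layN (π c) = m - w.length := by
    intro c
    obtain ⟨w, rfl⟩ := hword c
    refine ⟨w, ?_, piApp w c₀, ?_⟩
    · rw [layApp, hc₀top]
    · rw [piApp, layAppN, hetop]
  -- covering lemma: each d of layer m - t (t ≤ m) is hit by a word of length t
  have hcover : ∀ (d : CN) (t : ℕ), t ≤ m → layN d = m - t →
      ∃ w : List (Fin k), w.length = t ∧ w.foldr σN e = d := by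
    intro d t htm hd
    obtain ⟨w, rfl⟩ := hereach d
    have hlw := layAppN w e
    rw [hetop] at hlw
    rcases le_or_gt w.length m with hle | hlt
    · have : w.length = t := by omega
      exact ⟨w, this, rfl⟩
    · -- layer is 0, so t = m; truncate to the last m letters
      have ht : t = m := by omega
      refine ⟨w.drop (w.length - m), by simp; omega, ?_⟩
      conv_rhs => rw [← List.take_append_drop (w.length - m) w]
      rw [List.foldr_append]
      refine (fixAppN _ _ ?_).symm
      rw [layAppN, hetop]
      simp
      omega
  refine ⟨hmn, ?_, ?_⟩
  · intro j hj
    ext d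
    constructor
    · rintro ⟨c, hc, rfl⟩
      simp only [Set.mem_setOf_eq] at hc ⊢
      obtain ⟨w, h1, -, h3⟩ := main c
      omega
    · intro hd
      simp only [Set.mem_setOf_eq] at hd
      obtain ⟨w, hwl, hwd⟩ := hcover d j hj hd
      refine ⟨w.foldr σL c₀, ?_, ?_⟩
      · simp only [Set.mem_setOf_eq]
        rw [layApp, hc₀top, hwl]
      · rw [piApp, ← he, hwd]
  · intro j' hj'
    ext d
    constructor
    · rintro ⟨c, hc, rfl⟩
      simp only [Set.mem_setOf_eq] at hc ⊢
      obtain ⟨w, h1, -, h3⟩ := main c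
      omega
    · intro hd
      simp only [Set.mem_setOf_eq] at hd
      obtain ⟨w, hwl, hwd⟩ := hcover d m le_rfl (by omega)
      -- pad with n - j' - m extra letters if needed
      rcases Nat.eq_zero_or_pos (n - j' - m) with hp | hp
      · refine ⟨w.foldr σL c₀, ?_, ?_⟩
        · simp only [Set.mem_setOf_eq]
          rw [layApp, hc₀top, hwl]
          omega
        · rw [piApp, ← he, hwd]
      · have hn : 0 < n := by omega
        obtain ⟨c1, hc1⟩ := hsurjL 0 (Nat.zero_le n)
        obtain ⟨c2, i, -, -⟩ := hsourceL c1 (by omega)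
        refine ⟨(List.replicate (n - j' - m) i ++ w).foldr σL c₀, ?_, ?_⟩
        · simp only [Set.mem_setOf_eq]
          rw [layApp, hc₀top]
          simp [hwl]
          omega
        · rw [piApp, ← he, List.foldr_append, hwd, fixAppN _ _ hd]
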